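/- The product of two orthonormal Legendre polynomials satisfies L_k(y) L_l(y) = Σ_{m=|k-l|}^{k+l} c(k,l,m) L_m(y), where c(k,l,m) is zero when k+l+m is odd and otherwise equals (A(g-k)A(g-l)A(g-m)/A(g)) · sqrt((2k+1)(2l+1)(2m+1))/(2g+1), with g = (k+l+m)/2 and A(n) = binomial(2n,n)/2^n. -/

import Mathlib

set_option maxHeartbeats 2000000

open MeasureTheory Real Filter

/-- The `n`-th orthonormal Legendre polynomial on `[-1,1]` w.r.t. weight `1/2`,
via Rodrigues' formula. -/
noncomputable def L (n : ℕ) : ℝ → ℝ := fun y =>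
  (Real.sqrt (2 * n + 1) / ((2 : ℝ) ^ n * n.factorial)) *
    iteratedDeriv n (fun t : ℝ => (t ^ 2 - 1) ^ n) y

/-- `A n = binomial(2n, n) / 2^n`. -/
noncomputable def A (n : ℕ) : ℝ := ((2 * n).choose n : ℝ) / 2 ^ n

open Polynomial

noncomputable section

def vP (n : ℕ) : ℝ[X] := ((X:ℝ[X])^2 - 1)^n

def qP (n : ℕ) : ℝ[X] := derivative^[n] (vP n)

lemma iter_deriv_X_mul (m : ℕ) (p : ℝ[X]) :
    derivative^[m+1] (X * p) = X * derivative^[m+1] p + C ((m:ℝ)+1) * derivative^[m] p := by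
  induction m with
  | zero =>
    apply Polynomial.funext; intro x
    simp
    ring
  | succ n ih =>
    rw [Function.iterate_succ_apply', ih]
    simp only [map_add, derivative_mul, derivative_X, derivative_C,
      ← Function.iterate_succ_apply']
    apply Polynomial.funext; intro x
    simp
    push_cast
    ring

lemma iter_deriv_sq_mul (m : ℕ) (p : ℝ[X]) :
    derivative^[m+2] (((X:ℝ[X])^2 - 1) * p) =
      ((X:ℝ[X])^2 - 1) * derivative^[m+2] p + C (2*(m:ℝ)+4) * (X * derivative^[m+1] p)
        + C (((m:ℝ)+2)*((m:ℝ)+1)) * derivative^[m] p := by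
  induction m with
  | zero =>
    show derivative (derivative _) = _
    simp only [derivative_mul, derivative_sub, derivative_one, derivative_pow, derivative_X,
      map_add, derivative_C]
    apply Polynomial.funext; intro x
    simp [Function.iterate_succ_apply']
    ring
  | succ n ih =>
    rw [show n+1+2 = (n+2)+1 from rfl, Function.iterate_succ_apply', ih]
    simp only [map_add, derivative_mul, derivative_X, derivative_C,
      derivative_sub, derivative_one, derivative_pow]
    rw [show ∀ q : ℝ[X], derivative (derivative^[n+2] q) = derivative^[n+3] q from
        fun q => (Function.iterate_succ_apply' _ _ _).symm,
      show ∀ q : ℝ[X], derivative (derivative^[n+1] q) = derivative^[n+2] q from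
        fun q => (Function.iterate_succ_apply' _ _ _).symm,
      show ∀ q : ℝ[X], derivative (derivative^[n] q) = derivative^[n+1] q from
        fun q => (Function.iterate_succ_apply' _ _ _).symm,
      show n+2+1 = n+3 from rfl]
    apply Polynomial.funext; intro x
    simp
    push_cast
    ring

lemma iter_deriv_C_mul (a : ℝ) (m : ℕ) (p : ℝ[X]) :
    derivative^[m] (C a * p) = C a * derivative^[m] p := by
  induction m with
  | zero => rfl
  | succ m ih =>
    rw [Function.iterate_succ_apply', ih, derivative_C_mul,
      show derivative (derivative^[m] p) = derivative^[m+1] p from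
        (Function.iterate_succ_apply' _ _ _).symm]

lemma deriv_vP (n : ℕ) : derivative (vP (n+1)) = C (2*(n:ℝ)+2) * (X * vP n) := by
  unfold vP
  rw [derivative_pow]
  apply Polynomial.funext; intro x
  simp
  ring

lemma R1 : ∀ n : ℕ, qP (n+1) = C (2*(n:ℝ)+2) * (X * qP n)
    + 2 * (((X:ℝ[X])^2 - 1) * derivative (qP n)) := by
  have key : ∀ n : ℕ, qP (n+2) = C (2*(n:ℝ)+4) * (X * qP (n+1))
      + 2 * (((X:ℝ[X])^2 - 1) * derivative (qP (n+1))) := by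
    intro n
    have hA : qP (n+2) = C (2*(n:ℝ)+4) * (X * qP (n+1)
        + C ((n:ℝ)+1) * derivative^[n] (vP (n+1))) := by
      show derivative^[n+2] (vP (n+2)) = _
      rw [Function.iterate_succ_apply, deriv_vP (n+1), iter_deriv_C_mul, iter_deriv_X_mul,
        show derivative^[n+1] (vP (n+1)) = qP (n+1) from rfl]
      apply Polynomial.funext; intro x
      simp only [eval_mul, eval_add, eval_C, eval_X]
      push_cast
      ring
    have hB : qP (n+2) = ((X:ℝ[X])^2 - 1) * derivative (qP (n+1))
        + C (2*(n:ℝ)+4) * (X * qP (n+1))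
        + C (((n:ℝ)+2)*((n:ℝ)+1)) * derivative^[n] (vP (n+1)) := by
      show derivative^[n+2] (vP (n+2)) = _
      rw [show vP (n+2) = ((X:ℝ[X])^2-1) * vP (n+1) by rw [vP, vP, pow_succ]; ring]
      rw [iter_deriv_sq_mul]
      rw [show derivative^[n+2] (vP (n+1)) = derivative (qP (n+1)) from
        Function.iterate_succ_apply' _ _ _]
      rfl
    have hC : ((X:ℝ[X])^2 - 1) * derivative (qP (n+1))
        = C (((n:ℝ)+1)*((n:ℝ)+2)) * derivative^[n] (vP (n+1)) := by
      apply Polynomial.funext; intro x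
      have h1 := congrArg (eval x) hA
      have h2 := congrArg (eval x) hB
      simp at h1 h2 ⊢
      linear_combination h1 - h2
    apply Polynomial.funext; intro x
    have h1 := congrArg (eval x) hA
    have h3 := congrArg (eval x) hC
    simp at h1 h3 ⊢
    linear_combination h1 - 2 * h3
  intro n
  cases n with
  | zero =>
    show derivative^[1] (vP 1) = _
    apply Polynomial.funext; intro x
    simp [vP, qP]
    norm_num
  | succ m =>
    apply Polynomial.funext; intro x
    have h := congrArg (eval x) (key m)
    simp at h ⊢
    push_cast
    linear_combination h

lemma R2 (n : ℕ) : derivative (qP (n+1)) = C (2*(n:ℝ)+2) * (X * derivative (qP n))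
    + C (2*((n:ℝ)+1)^2) * qP n := by
  have : derivative (qP (n+1)) = derivative^[n+1] (derivative (vP (n+1))) := by
    show derivative (derivative^[n+1] (vP (n+1))) = _
    rw [show derivative (derivative^[n+1] (vP (n+1))) = derivative^[n+1+1] (vP (n+1)) from
      (Function.iterate_succ_apply' _ _ _).symm, Function.iterate_succ_apply]
  rw [this, deriv_vP, iter_deriv_C_mul, iter_deriv_X_mul]
  apply Polynomial.funext; intro x
  have : eval x (derivative^[n+1] (vP n)) = eval x (derivative (qP n)) := by
    rw [show derivative^[n+1] (vP n) = derivative (qP n) from Function.iterate_succ_apply' _ _ _]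
  simp [qP] at this ⊢
  push_cast
  linear_combination (2*(n:ℝ)+2) * x * this

lemma three_term (n : ℕ) : qP (n+2) = C (4*(n:ℝ)+6) * (X * qP (n+1))
    - C (4*((n:ℝ)+1)^2) * qP n := by
  apply Polynomial.funext; intro x
  have h1 := congrArg (eval x) (R1 (n+1))
  have h2 := congrArg (eval x) (R2 n)
  have h3 := congrArg (eval x) (R1 n)
  simp at h1 h2 h3 ⊢
  push_cast at h1
  linear_combination h1 + 2*(x^2-1)*h2 - (2*(n:ℝ)+2)*x*h3

def PP (n : ℕ) : ℝ[X] := C (((2:ℝ)^n * n.factorial)⁻¹) * qP n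

lemma eval_PP (x : ℝ) (n : ℕ) :
    eval x (PP n) = ((2:ℝ)^n * n.factorial)⁻¹ * eval x (qP n) := by simp [PP]

lemma two_pow_fact_ne (n : ℕ) : ((2:ℝ)^n * n.factorial) ≠ 0 := by
  positivity

lemma PP_rec (n : ℕ) : C ((n:ℝ)+2) * PP (n+2) = C (2*(n:ℝ)+3) * (X * PP (n+1)) - C ((n:ℝ)+1) * PP n := by
  apply Polynomial.funext; intro x
  have h := congrArg (eval x) (three_term n)
  simp only [eval_mul, eval_sub, eval_add, eval_C, eval_X] at h ⊢
  rw [eval_PP, eval_PP, eval_PP, h]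
  have h0 := two_pow_fact_ne n
  have h1 := two_pow_fact_ne (n+1)
  have h2 := two_pow_fact_ne (n+2)
  field_simp
  simp only [Nat.factorial_succ, pow_succ]
  push_cast
  ring

lemma XP : ∀ m : ℕ, C (2*(m:ℝ)+1) * (X * PP m) = C ((m:ℝ)+1) * PP (m+1) + C (m:ℝ) * PP (m-1) := by
  intro m
  cases m with
  | zero =>
    apply Polynomial.funext; intro x
    simp [PP, qP, vP]
    ring
  | succ n =>
    apply Polynomial.funext; intro x
    have h := congrArg (eval x) (PP_rec n)
    simp only [eval_mul, eval_sub, eval_add, eval_C, eval_X] at h ⊢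
    push_cast
    rw [show n+1+1 = n+2 from rfl]
    linear_combination -h

lemma A_eq (n : ℕ) : A n = (Nat.centralBinom n : ℝ) / 2^n := rfl

lemma A_pos (n : ℕ) : 0 < A n := by
  rw [A_eq]
  have h := Nat.centralBinom_pos n
  have : (0:ℝ) < Nat.centralBinom n := by exact_mod_cast h
  positivity

lemma A_succ (n : ℕ) : A (n+1) = A n * (2*(n:ℝ)+1) / ((n:ℝ)+1) := by
  rw [A_eq, A_eq]
  have h := Nat.succ_mul_centralBinom_succ n
  have h' : ((n:ℝ)+1) * (Nat.centralBinom (n+1) : ℝ) = 2 * (2*(n:ℝ)+1) * (Nat.centralBinom n : ℝ) := by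
    exact_mod_cast congrArg (Nat.cast : ℕ → ℝ) h
  have hn : ((n:ℝ)+1) ≠ 0 := by positivity
  field_simp [pow_succ]
  linear_combination (2:ℝ)^n * h'

/-- Linearization coefficient. -/
def cc (k l s : ℕ) : ℝ :=
  if s ≤ k ∧ s ≤ l then
    A (l-s) * A (k-s) * A s / A (k+l-s) * (2*((k+l-2*s : ℕ) : ℝ)+1) / (2*((k+l-s : ℕ) : ℝ)+1)
  else 0

lemma cc_of_not (k l s : ℕ) (h : ¬ (s ≤ k ∧ s ≤ l)) : cc k l s = 0 := if_neg h
lemma cc_of_le (k l s : ℕ) (h1 : s ≤ k) (h2 : s ≤ l) :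
    cc k l s = A (l-s) * A (k-s) * A s / A (k+l-s)
      * (2*((k+l-2*s : ℕ) : ℝ)+1) / (2*((k+l-s : ℕ) : ℝ)+1) := if_pos ⟨h1, h2⟩

lemma ccrec0 (k l : ℕ) :
    ((k:ℝ)+2) * cc (k+2) l 0 =
      (2*(k:ℝ)+3) * (cc (k+1) l 0 * (((k+1+l : ℕ):ℝ)+1) / (2*((k+1+l : ℕ):ℝ)+1)) := by
  rw [cc_of_le _ _ _ (by omega) (by omega), cc_of_le _ _ _ (by omega) (by omega)]
  simp only [Nat.sub_zero, Nat.mul_zero]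
  rw [show k+2 = (k+1)+1 by omega, show k+1+1+l = (k+1+l)+1 by omega]
  rw [A_succ (k+1), A_succ (k+1+l)]
  have a1 := (A_pos l).ne'
  have a2 := (A_pos (k+1)).ne'
  have a3 := (A_pos (k+1+l)).ne'
  have n1 : ((k:ℝ)+1+1) ≠ 0 := by positivity
  have n2 : (2*((k:ℝ)+1)+1) ≠ 0 := by positivity
  push_cast
  have n3 : ((k:ℝ)+1+(l:ℝ)+1) ≠ 0 := by positivity
  have n4 : (2*((k:ℝ)+1+(l:ℝ))+1) ≠ 0 := by positivity
  have n5 : (2*((k:ℝ)+2+(l:ℝ))+1) ≠ 0 := by positivity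
  have n6 : (2*((k:ℝ)+1+(l:ℝ))+3) ≠ 0 := by positivity
  field_simp
  ring

lemma ccrecS (k l s : ℕ) :
    ((k:ℝ)+2) * cc (k+2) l (s+1) =
      (2*(k:ℝ)+3) * ( cc (k+1) l (s+1) * (((k+1+l-2*(s+1) : ℕ):ℝ)+1) / (2*((k+1+l-2*(s+1) : ℕ):ℝ)+1)
        + cc (k+1) l s * ((k+1+l-2*s : ℕ):ℝ) / (2*((k+1+l-2*s : ℕ):ℝ)+1) )
      - ((k:ℝ)+1) * cc k l s := by
  by_cases h1 : s+1 ≤ l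
  · by_cases h2 : s ≤ k
    · -- interior
      obtain ⟨i, rfl⟩ : ∃ i, l = i + s + 1 := ⟨l - s - 1, by omega⟩
      obtain ⟨t, rfl⟩ : ∃ t, k = t + s := ⟨k - s, by omega⟩
      rw [cc_of_le _ _ _ (by omega) (by omega), cc_of_le _ _ _ (by omega) (by omega),
        cc_of_le _ _ _ (by omega) (by omega), cc_of_le _ _ _ (by omega) (by omega)]
      rw [show i+s+1-(s+1) = i by omega,
        show t+s+2-(s+1) = t+1 by omega,
        show t+s+2+(i+s+1)-2*(s+1) = i+t+1 by omega,
        show t+s+2+(i+s+1)-(s+1) = (i+t+s+1)+1 by omega,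
        show t+s+1-(s+1) = t by omega,
        show t+s+1+(i+s+1)-2*(s+1) = i+t by omega,
        show t+s+1+(i+s+1)-(s+1) = i+t+s+1 by omega,
        show i+s+1-s = i+1 by omega,
        show t+s+1-s = t+1 by omega,
        show t+s+1+(i+s+1)-2*s = i+t+2 by omega,
        show t+s+1+(i+s+1)-s = (i+t+s+1)+1 by omega,
        show t+s-s = t by omega,
        show t+s+(i+s+1)-2*s = i+t+1 by omega,
        show t+s+(i+s+1)-s = i+t+s+1 by omega]
      rw [A_succ (i+t+s+1), A_succ t, A_succ i, A_succ s]
      have a1 := (A_pos i).ne'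
      have a2 := (A_pos t).ne'
      have a3 := (A_pos s).ne'
      have a4 := (A_pos (i+t+s+1)).ne'
      push_cast
      have n1 : ((i:ℝ)+(t:ℝ)+(s:ℝ)+1+1) ≠ 0 := by positivity
      have n2 : (2*((i:ℝ)+(t:ℝ)+(s:ℝ)+1)+1) ≠ 0 := by positivity
      have n3 : ((t:ℝ)+1) ≠ 0 := by positivity
      have n4 : (2*(t:ℝ)+1) ≠ 0 := by positivity
      have n5 : ((i:ℝ)+1) ≠ 0 := by positivity
      have n6 : (2*(i:ℝ)+1) ≠ 0 := by positivity
      have n7 : ((s:ℝ)+1) ≠ 0 := by positivity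
      have n8 : (2*(s:ℝ)+1) ≠ 0 := by positivity
      have n9 : (2*((i:ℝ)+(t:ℝ)+1)+1) ≠ 0 := by positivity
      have n10 : (2*((i:ℝ)+(t:ℝ))+1) ≠ 0 := by positivity
      have n11 : (2*((i:ℝ)+(t:ℝ)+2)+1) ≠ 0 := by positivity
      have n12 : (2*((i:ℝ)+(t:ℝ)+(s:ℝ)+1)+3) ≠ 0 := by positivity
      field_simp
      ring
    · by_cases h3 : s = k+1
      · -- case II : s = k+1, s+1 ≤ l
        subst h3
        obtain ⟨i, rfl⟩ : ∃ i, l = i + (k+2) := ⟨l - (k+2), by omega⟩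
        rw [cc_of_le (k+2) (i+(k+2)) (k+1+1) (by omega) (by omega),
          cc_of_not (k+1) (i+(k+2)) (k+1+1) (by omega),
          cc_of_le (k+1) (i+(k+2)) (k+1) (by omega) (by omega),
          cc_of_not k (i+(k+2)) (k+1) (by omega)]
        rw [show i+(k+2)-(k+1+1) = i by omega,
          show k+2-(k+1+1) = 0 by omega,
          show k+2+(i+(k+2))-(k+1+1) = (i+k+1)+1 by omega,
          show k+2+(i+(k+2))-2*(k+1+1) = i by omega,
          show k+1+(i+(k+2))-(k+1) = (i+k+1)+1 by omega,
          show k+1+(i+(k+2))-2*(k+1) = i+1 by omega,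
          show i+(k+2)-(k+1) = i+1 by omega,
          show k+1-(k+1) = 0 by omega,
          show k+1+1 = (k+1)+1 by omega]
        rw [A_succ (k+1), A_succ (i+k+1), A_succ i]
        have a1 := (A_pos i).ne'
        have a2 := (A_pos (k+1)).ne'
        have a3 := (A_pos (i+k+1)).ne'
        have a0 := (A_pos 0).ne'
        push_cast
        have n1 : ((i:ℝ)+(k:ℝ)+1+1) ≠ 0 := by positivity
        have n2 : (2*((i:ℝ)+(k:ℝ)+1)+1) ≠ 0 := by positivity
        have n3 : ((k:ℝ)+1+1) ≠ 0 := by positivity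
        have n4 : (2*((k:ℝ)+1)+1) ≠ 0 := by positivity
        have n5 : ((i:ℝ)+1) ≠ 0 := by positivity
        have n6 : (2*(i:ℝ)+1) ≠ 0 := by positivity
        have n7 : (2*((i:ℝ)+1)+1) ≠ 0 := by positivity
        have n8 : (2*((i:ℝ)+(k:ℝ)+1)+3) ≠ 0 := by positivity
        field_simp
        ring
      · rw [cc_of_not (k+2) l (s+1) (by omega), cc_of_not (k+1) l (s+1) (by omega),
          cc_of_not (k+1) l s (by omega), cc_of_not k l s (by omega)]
        ring
  · by_cases h4 : s = l
    · subst h4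
      by_cases h5 : s ≤ k
      · -- III.a.1
        obtain ⟨t, rfl⟩ : ∃ t, k = t + s := ⟨k - s, by omega⟩
        rw [cc_of_not (t+s+2) s (s+1) (by omega), cc_of_not (t+s+1) s (s+1) (by omega),
          cc_of_le (t+s+1) s s (by omega) (by omega), cc_of_le (t+s) s s (by omega) (by omega)]
        rw [show s-s = 0 by omega,
          show t+s+1-s = t+1 by omega,
          show t+s+1+s-s = (t+s)+1 by omega,
          show t+s+1+s-2*s = t+1 by omega,
          show t+s-s = t by omega,
          show t+s+s-s = t+s by omega,
          show t+s+s-2*s = t by omega]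
        rw [A_succ t, A_succ (t+s)]
        have a1 := (A_pos t).ne'
        have a2 := (A_pos s).ne'
        have a3 := (A_pos (t+s)).ne'
        have a0 := (A_pos 0).ne'
        push_cast
        have n1 : ((t:ℝ)+(s:ℝ)+1) ≠ 0 := by positivity
        have n2 : (2*((t:ℝ)+(s:ℝ))+1) ≠ 0 := by positivity
        have n3 : ((t:ℝ)+1) ≠ 0 := by positivity
        have n4 : (2*(t:ℝ)+1) ≠ 0 := by positivity
        have n5 : (2*((t:ℝ)+1)+1) ≠ 0 := by positivity
        have n6 : (2*((t:ℝ)+(s:ℝ))+3) ≠ 0 := by positivity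
        field_simp
        ring
      · by_cases h6 : s = k+1
        · subst h6
          rw [cc_of_not (k+2) (k+1) (k+1+1) (by omega), cc_of_not (k+1) (k+1) (k+1+1) (by omega),
            cc_of_not k (k+1) (k+1) (by omega)]
          rw [show k+1+(k+1)-2*(k+1) = 0 by omega]
          norm_num
        · rw [cc_of_not (k+2) s (s+1) (by omega), cc_of_not (k+1) s (s+1) (by omega),
            cc_of_not (k+1) s s (by omega), cc_of_not k s s (by omega)]
          ring
    · rw [cc_of_not (k+2) l (s+1) (by omega), cc_of_not (k+1) l (s+1) (by omega),
        cc_of_not (k+1) l s (by omega), cc_of_not k l s (by omega)]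
      ring

lemma A_zero : A 0 = 1 := by norm_num [A]
lemma A_one : A 1 = 1 := by norm_num [A]

lemma lin (x : ℝ) (u : ℕ → ℝ) (h0 : u 0 = 1) (h1 : u 1 = x)
    (hXP : ∀ m : ℕ, (2*(m:ℝ)+1) * (x * u m) = ((m:ℝ)+1) * u (m+1) + (m:ℝ) * u (m-1)) :
    ∀ k l : ℕ, u k * u l = ∑ s ∈ Finset.range (k+1), cc k l s * u (k+l-2*s) := by
  intro k l
  induction k using Nat.twoStepInduction with
  | zero =>
    rw [Finset.sum_range_one, h0]
    rw [cc_of_le 0 l 0 (by omega) (by omega)]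
    simp only [Nat.sub_zero, Nat.mul_zero, Nat.zero_add]
    rw [A_zero]
    have := (A_pos l).ne'
    have h2 : (2*((l:ℕ):ℝ)+1) ≠ 0 := by positivity
    field_simp
  | one =>
    rw [Finset.sum_range_succ, Finset.sum_range_one]
    cases l with
    | zero =>
      rw [cc_of_le 1 0 0 (by omega) (by omega), cc_of_not 1 0 1 (by omega)]
      norm_num [A_zero, A_one]
      have := (A_pos 1).ne'
      rw [h0, h1]
      field_simp
    | succ j =>
      have hc0 : cc 1 (j+1) 0 = ((j:ℝ)+2)/(2*(j:ℝ)+3) := by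
        rw [cc_of_le 1 (j+1) 0 (by omega) (by omega)]
        simp only [Nat.sub_zero, Nat.mul_zero]
        rw [show (1:ℕ)+(j+1) = (j+1)+1 by omega]
        rw [A_zero, A_one, A_succ (j+1), A_succ j]
        have a1 := (A_pos j).ne'
        have n1 : ((j:ℝ)+1) ≠ 0 := by positivity
        have n2 : (2*(j:ℝ)+1) ≠ 0 := by positivity
        have n3 : ((j:ℝ)+1+1) ≠ 0 := by positivity
        have n4 : (2*((j:ℝ)+1)+1) ≠ 0 := by positivity
        push_cast
        have n5 : (2*((j:ℝ)+2)+1) ≠ 0 := by positivity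
        have n6 : (2*((j:ℝ)+1)+3) ≠ 0 := by positivity
        field_simp
        ring
      have hc1 : cc 1 (j+1) 1 = ((j:ℝ)+1)/(2*(j:ℝ)+3) := by
        rw [cc_of_le 1 (j+1) 1 (by omega) (by omega)]
        rw [show j+1-1 = j by omega, show (1:ℕ)-1 = 0 by omega,
          show (1:ℕ)+(j+1)-1 = j+1 by omega, show (1:ℕ)+(j+1)-2*1 = j by omega]
        rw [A_zero, A_one, A_succ j]
        have a1 := (A_pos j).ne'
        have n1 : ((j:ℝ)+1) ≠ 0 := by positivity
        have n2 : (2*(j:ℝ)+1) ≠ 0 := by positivity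
        push_cast
        have n3 : (2*(j:ℝ)+3) ≠ 0 := by positivity
        field_simp
        ring
      rw [hc0, hc1, h1]
      have hm := hXP (j+1)
      rw [show j+1-1 = j from rfl, show j+1+1 = j+2 from rfl] at hm
      push_cast at hm
      rw [show (1:ℕ)+(j+1)-2*0 = j+2 by omega, show (1:ℕ)+(j+1)-2*1 = j by omega]
      have n6 : (2*(j:ℝ)+3) ≠ 0 := by positivity
      field_simp
      linear_combination hm
  | more k ih0 ih1 =>
    have hk2 : ((k:ℝ)+2) ≠ 0 := by positivity
    have hrec : ((k:ℝ)+2) * u (k+2) = (2*(k:ℝ)+3)*(x * u (k+1)) - ((k:ℝ)+1) * u k := by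
      have h := hXP (k+1)
      rw [show k+1-1 = k from rfl, show k+1+1 = k+2 from rfl] at h
      push_cast at h
      linear_combination -h
    apply mul_left_cancel₀ hk2
    have e1 : ∑ s ∈ Finset.range (k+2), cc (k+1) l s * (x * u (k+1+l-2*s))
        = x * (u (k+1) * u l) := by
      rw [ih1, Finset.mul_sum]
      exact Finset.sum_congr rfl (fun s _ => by ring)
    have hE : ∀ s : ℕ, cc (k+1) l s * (x * u (k+1+l-2*s))
        = cc (k+1) l s * ((((k+1+l-2*s : ℕ):ℝ)+1)/(2*((k+1+l-2*s : ℕ):ℝ)+1)) * u (k+2+l-2*s)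
          + cc (k+1) l s * (((k+1+l-2*s : ℕ):ℝ)/(2*((k+1+l-2*s : ℕ):ℝ)+1)) * u (k+l-2*s) := by
      intro s
      by_cases hg : s ≤ k+1 ∧ s ≤ l
      · have hm := hXP (k+1+l-2*s)
        have i1 : k+1+l-2*s+1 = k+2+l-2*s := by omega
        have i2 : k+1+l-2*s-1 = k+l-2*s := by
          rcases Nat.eq_zero_or_pos (k+1+l-2*s) with h|h
          · omega
          · omega
        rw [i1, i2] at hm
        have n1 : (2*((k+1+l-2*s : ℕ):ℝ)+1) ≠ 0 := by positivity
        field_simp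
        linear_combination cc (k+1) l s * hm
      · rw [cc_of_not _ _ _ hg]
        ring
    -- split the sum
    have e2 : ∑ s ∈ Finset.range (k+2), cc (k+1) l s * (x * u (k+1+l-2*s))
        = (∑ s ∈ Finset.range (k+3),
            cc (k+1) l s * ((((k+1+l-2*s : ℕ):ℝ)+1)/(2*((k+1+l-2*s : ℕ):ℝ)+1)) * u (k+2+l-2*s))
          + (∑ s ∈ Finset.range (k+3),
            if s = 0 then 0 else
              cc (k+1) l (s-1) * (((k+1+l-2*(s-1) : ℕ):ℝ)/(2*((k+1+l-2*(s-1) : ℕ):ℝ)+1)) * u (k+2+l-2*s)) := by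
      rw [Finset.sum_congr rfl (fun s _ => hE s), Finset.sum_add_distrib]
      congr 1
      · rw [Finset.sum_range_succ (n := k+2), cc_of_not (k+1) l (k+2) (by omega)]
        ring
      · rw [Finset.sum_range_succ'
            (f := fun s => if s = 0 then (0:ℝ) else
              cc (k+1) l (s-1) * (((k+1+l-2*(s-1) : ℕ):ℝ)/(2*((k+1+l-2*(s-1) : ℕ):ℝ)+1)) * u (k+2+l-2*s))
            (n := k+2)]
        norm_num
        apply Finset.sum_congr rfl
        intro s _
        rw [show k+2+l-2*(s+1) = k+l-2*s by omega]
    have e3 : ∑ s ∈ Finset.range (k+1), cc k l s * u (k+l-2*s)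
        = ∑ s ∈ Finset.range (k+3), (if s = 0 then 0 else cc k l (s-1) * u (k+2+l-2*s)) := by
      rw [Finset.sum_range_succ'
          (f := fun s => if s = 0 then (0:ℝ) else cc k l (s-1) * u (k+2+l-2*s)) (n := k+2)]
      norm_num
      rw [show (∑ s ∈ Finset.range (k+2), cc k l s * u (k+2+l-2*(s+1)))
          = ∑ s ∈ Finset.range (k+2), cc k l s * u (k+l-2*s) from
        Finset.sum_congr rfl (fun s _ => by
          rw [show k+2+l-2*(s+1) = k+l-2*s by omega])]
      rw [Finset.sum_range_succ (f := fun s => cc k l s * u (k+l-2*s)) (n := k+1),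
        cc_of_not k l (k+1) (by omega)]
      ring
    have main : ((k:ℝ)+2) * (u (k+2) * u l)
        = (2*(k:ℝ)+3) * (∑ s ∈ Finset.range (k+2), cc (k+1) l s * (x * u (k+1+l-2*s)))
          - ((k:ℝ)+1) * ∑ s ∈ Finset.range (k+1), cc k l s * u (k+l-2*s) := by
      rw [← ih0]
      linear_combination (u l) * hrec - (2*(k:ℝ)+3) * e1
    rw [main, e2, e3]
    rw [show k+2+1 = k+3 from rfl]
    rw [show ((k:ℝ)+2) * ∑ s ∈ Finset.range (k+3), cc (k+2) l s * u (k+2+l-2*s)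
        = ∑ s ∈ Finset.range (k+3), ((k:ℝ)+2) * (cc (k+2) l s * u (k+2+l-2*s)) from
      by rw [Finset.mul_sum]]
    rw [show (∑ s ∈ Finset.range (k+3), ((k:ℝ)+2) * (cc (k+2) l s * u (k+2+l-2*s)))
        = ∑ s ∈ Finset.range (k+3),
            ((2*(k:ℝ)+3) * (cc (k+1) l s * ((((k+1+l-2*s : ℕ):ℝ)+1)/(2*((k+1+l-2*s : ℕ):ℝ)+1)) * u (k+2+l-2*s)
              + (if s = 0 then 0 else
                  cc (k+1) l (s-1) * (((k+1+l-2*(s-1) : ℕ):ℝ)/(2*((k+1+l-2*(s-1) : ℕ):ℝ)+1)) * u (k+2+l-2*s)))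
            - ((k:ℝ)+1) * (if s = 0 then 0 else cc k l (s-1) * u (k+2+l-2*s))) from
      Finset.sum_congr rfl (fun s _ => by
        cases s with
        | zero =>
          norm_num
          push_cast
          have hc := ccrec0 k l
          push_cast at hc
          linear_combination (u (k+2+l)) * hc
        | succ s =>
          rw [if_neg (Nat.succ_ne_zero s), if_neg (Nat.succ_ne_zero s),
            show s+1-1 = s from rfl]
          linear_combination (u (k+2+l-2*(s+1))) * ccrecS k l s)]
    rw [Finset.sum_sub_distrib]
    congr 1
    · rw [← Finset.mul_sum, Finset.sum_add_distrib]
    · rw [← Finset.mul_sum]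

lemma iterated_eval (p : ℝ[X]) (n : ℕ) :
    iteratedDeriv n (fun t : ℝ => eval t p) = fun t => eval t (derivative^[n] p) := by
  induction n with
  | zero => simp
  | succ n ih =>
    rw [iteratedDeriv_succ, ih]
    funext t
    rw [show derivative^[n+1] p = derivative (derivative^[n] p) from
      Function.iterate_succ_apply' _ _ _]
    exact Polynomial.deriv _

lemma L_eq (n : ℕ) (y : ℝ) : L n y = Real.sqrt (2*n+1) * eval y (PP n) := by
  have h1 : (fun t : ℝ => (t ^ 2 - 1) ^ n) = fun t => eval t (vP n) := by
    funext t; simp [vP]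
  rw [L, h1, iterated_eval]
  show Real.sqrt (2*n+1) / ((2:ℝ)^n * n.factorial) * eval y (qP n) = _
  rw [PP]
  have : ((2:ℝ)^n * n.factorial) ≠ 0 := by positivity
  simp only [eval_mul, eval_C]
  field_simp

lemma u_zero (y : ℝ) : eval y (PP 0) = 1 := by
  simp [PP, qP, vP]

lemma u_one (y : ℝ) : eval y (PP 1) = y := by
  simp [PP, qP, vP]
  ring

lemma u_XP (y : ℝ) : ∀ m : ℕ, (2*(m:ℝ)+1) * (y * eval y (PP m))
    = ((m:ℝ)+1) * eval y (PP (m+1)) + (m:ℝ) * eval y (PP (m-1)) := by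
  intro m
  have := congrArg (eval y) (XP m)
  simpa using this

theorem legendre_linearization (k l : ℕ) (y : ℝ) :
    L k y * L l y =
      ∑ m ∈ Finset.Icc (max (k - l) (l - k)) (k + l),
        (if Odd (k + l + m) then 0 else
          A ((k + l + m) / 2 - k) * A ((k + l + m) / 2 - l) * A ((k + l + m) / 2 - m) /
            A ((k + l + m) / 2) *
            Real.sqrt ((2 * k + 1) * (2 * l + 1) * (2 * m + 1)) /
            (2 * ((k + l + m) / 2 : ℕ) + 1)) * L m y := by
  set u : ℕ → ℝ := fun n => eval y (PP n) with hu
  set f : ℕ → ℝ := fun m =>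
    (if Odd (k + l + m) then 0 else
      A ((k + l + m) / 2 - k) * A ((k + l + m) / 2 - l) * A ((k + l + m) / 2 - m) /
        A ((k + l + m) / 2) *
        Real.sqrt ((2 * k + 1) * (2 * l + 1) * (2 * m + 1)) /
        (2 * ((k + l + m) / 2 : ℕ) + 1)) * L m y with hf
  have hlin := lin y u (u_zero y) (u_one y) (u_XP y) k l
  have hsubset : ∑ s ∈ Finset.range (k+1), cc k l s * u (k+l-2*s)
      = ∑ s ∈ Finset.range (min k l + 1), cc k l s * u (k+l-2*s) := by
    symm
    apply Finset.sum_subset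
    · intro s hs
      simp only [Finset.mem_range] at hs ⊢
      omega
    · intro s _ hs
      simp only [Finset.mem_range] at hs
      rw [cc_of_not k l s (by omega), zero_mul]
  have hpoint : ∀ s ∈ Finset.range (min k l + 1),
      f (k+l-2*s) = Real.sqrt (2*k+1) * Real.sqrt (2*l+1) * (cc k l s * u (k+l-2*s)) := by
    intro s hs
    simp only [Finset.mem_range] at hs
    have hsk : s ≤ k := by omega
    have hsl : s ≤ l := by omega
    simp only [hf]
    have hpar : ¬ Odd (k + l + (k+l-2*s)) := by
      rw [show k+l+(k+l-2*s) = 2*(k+l-s) by omega]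
      simp [Nat.odd_iff, Nat.mul_mod_right]
    rw [if_neg hpar]
    rw [show (k+l+(k+l-2*s))/2 = k+l-s by omega,
      show k+l-s-k = l-s by omega, show k+l-s-l = k-s by omega,
      show k+l-s-(k+l-2*s) = s by omega]
    rw [L_eq (k+l-2*s) y, cc_of_le k l s hsk hsl]
    have hk0 : (0:ℝ) ≤ 2*(k:ℝ)+1 := by positivity
    have hl0 : (0:ℝ) ≤ 2*(l:ℝ)+1 := by positivity
    have hm0 : (0:ℝ) ≤ 2*((k+l-2*s : ℕ):ℝ)+1 := by positivity
    have hsqrt : Real.sqrt ((2*(k:ℝ)+1) * (2*(l:ℝ)+1) * (2*((k+l-2*s : ℕ):ℝ)+1))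
        = Real.sqrt (2*(k:ℝ)+1) * Real.sqrt (2*(l:ℝ)+1) * Real.sqrt (2*((k+l-2*s : ℕ):ℝ)+1) := by
      rw [Real.sqrt_mul (by positivity), Real.sqrt_mul hk0]
    have hms : Real.sqrt (2*((k+l-2*s : ℕ):ℝ)+1) * Real.sqrt (2*((k+l-2*s : ℕ):ℝ)+1)
        = 2*((k+l-2*s : ℕ):ℝ)+1 := Real.mul_self_sqrt hm0
    rw [hsqrt]
    have hA := (A_pos (k+l-s)).ne'
    have hd : (2*((k+l-s : ℕ):ℝ)+1) ≠ 0 := by positivity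
    field_simp
    linear_combination (A ((l:ℕ)-s) * A (k-s) * A s * eval y (PP (k+l-2*s))) * hms
  have hbij : ∑ s ∈ Finset.range (min k l + 1), f (k+l-2*s)
      = ∑ m ∈ (Finset.Icc (max (k-l) (l-k)) (k+l)).filter (fun m => ¬ Odd (k+l+m)), f m := by
    apply Finset.sum_nbij' (i := fun s => k+l-2*s) (j := fun m => (k+l-m)/2)
    · intro s hs
      simp only [Finset.mem_range] at hs
      simp only [Finset.mem_filter, Finset.mem_Icc]
      refine ⟨⟨by omega, by omega⟩, ?_⟩
      rw [show k+l+(k+l-2*s) = 2*(k+l-s) by omega]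
      simp [Nat.odd_iff, Nat.mul_mod_right]
    · intro m hm
      simp only [Finset.mem_filter, Finset.mem_Icc] at hm
      obtain ⟨⟨hm1, hm2⟩, hm3⟩ := hm
      have : (k+l+m) % 2 = 0 := by
        rcases Nat.even_or_odd (k+l+m) with h|h
        · exact Nat.even_iff.mp h
        · exact absurd h hm3
      simp only [Finset.mem_range]
      omega
    · intro s hs
      simp only [Finset.mem_range] at hs
      omega
    · intro m hm
      simp only [Finset.mem_filter, Finset.mem_Icc] at hm
      obtain ⟨⟨hm1, hm2⟩, hm3⟩ := hm
      have : (k+l+m) % 2 = 0 := by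
        rcases Nat.even_or_odd (k+l+m) with h|h
        · exact Nat.even_iff.mp h
        · exact absurd h hm3
      omega
    · intro s _
      rfl
  have hsplit : ∑ m ∈ (Finset.Icc (max (k-l) (l-k)) (k+l)).filter (fun m => ¬ Odd (k+l+m)), f m
      = ∑ m ∈ Finset.Icc (max (k-l) (l-k)) (k+l), f m := by
    rw [← Finset.sum_filter_add_sum_filter_not (Finset.Icc (max (k-l) (l-k)) (k+l))
      (fun m => Odd (k+l+m)) f]
    have h0 : ∑ m ∈ (Finset.Icc (max (k-l) (l-k)) (k+l)).filter (fun m => Odd (k+l+m)), f m = 0 := by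
      apply Finset.sum_eq_zero
      intro m hm
      simp only [Finset.mem_filter] at hm
      simp only [hf, if_pos hm.2, zero_mul]
    rw [h0, zero_add]
  calc L k y * L l y
      = Real.sqrt (2*(k:ℝ)+1) * Real.sqrt (2*(l:ℝ)+1) * (u k * u l) := by
        rw [L_eq k y, L_eq l y]; ring
    _ = Real.sqrt (2*(k:ℝ)+1) * Real.sqrt (2*(l:ℝ)+1)
          * ∑ s ∈ Finset.range (min k l + 1), cc k l s * u (k+l-2*s) := by
        rw [hlin, hsubset]
    _ = ∑ s ∈ Finset.range (min k l + 1),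
          Real.sqrt (2*(k:ℝ)+1) * Real.sqrt (2*(l:ℝ)+1) * (cc k l s * u (k+l-2*s)) := by
        rw [Finset.mul_sum]
    _ = ∑ s ∈ Finset.range (min k l + 1), f (k+l-2*s) :=
        (Finset.sum_congr rfl hpoint).symm
    _ = ∑ m ∈ (Finset.Icc (max (k-l) (l-k)) (k+l)).filter (fun m => ¬ Odd (k+l+m)), f m := hbij
    _ = ∑ m ∈ Finset.Icc (max (k-l) (l-k)) (k+l), f m := hsplit

end
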